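/- Let m ≥ 6 be a multiple of 3. If m − 1 has a witness, then B(R(m) + 1) = m/3; if m − 1 has no witness, then B(R(m) + 1) = m/3 − 1. In both cases, B(R(m) + 2) = m/3 and B(R(m) + 3) = m/3 + 1. -/
import Mathlib


/-- The auxiliary sequence: `a 1 = 3`, `a i = 3 * a (i-1) - 1` for `i ≥ 2`. -/
def a : ℕ → ℕ
  | 0 => 0
  | 1 => 3
  | n + 2 => 3 * a (n + 1) - 1

/-- `R(m, i) = max(0, ⌊(m − a i − 1)/3^i⌋)` (truncated ℕ-subtraction gives the max). -/
def Rmi (m i : ℕ) : ℕ := (m - a i - 1) / 3 ^ i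

/-- `R(m) = ∑_{i=1}^∞ R(m, i)`; all terms with `i > m` vanish, so a finite sum suffices. -/
def R (m : ℕ) : ℕ := ∑ i ∈ Finset.Icc 1 m, Rmi m i

/-- `m` has a witness pair `(k, i)` of positive integers with `m = k·3^i + a i`. -/
def HasWitness (m : ℕ) : Prop := ∃ k i : ℕ, 1 ≤ k ∧ 1 ≤ i ∧ m = k * 3 ^ i + a i

/-- `B` is the `B`-sequence: `B 0 = 0`, `B n = n` for `1 ≤ n ≤ 5`, and
`B n = B (n - B (n-1)) + B (n - B (n-2)) + B (n - B (n-3))` for `n ≥ 6`. -/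
def IsBSeq (B : ℕ → ℕ) : Prop :=
  B 0 = 0 ∧ (∀ n, 1 ≤ n → n ≤ 5 → B n = n) ∧
    ∀ n, 6 ≤ n → B n = B (n - B (n - 1)) + B (n - B (n - 2)) + B (n - B (n - 3))

lemma a_succ (i : ℕ) (h : 1 ≤ i) : a (i + 1) = 3 * a i - 1 := by
  match i, h with
  | n + 1, _ => rfl

lemma a_ge (i : ℕ) (h : 1 ≤ i) : i + 2 ≤ a i := by
  induction i with
  | zero => omega
  | succ n ih =>
    rcases Nat.eq_or_lt_of_le h with h1 | h1
    · simp [← h1]; rfl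
    · have hn : 1 ≤ n := by omega
      have := ih hn
      rw [a_succ n hn]; omega

lemma a_ge3 (i : ℕ) (h : 1 ≤ i) : 3 ≤ a i := by have := a_ge i h; omega

lemma pow3_ge (i : ℕ) (h : 1 ≤ i) : i + 2 ≤ 3 ^ i := by
  induction i with
  | zero => omega
  | succ n ih =>
    rcases Nat.eq_or_lt_of_le h with h1 | h1
    · simp [← h1]
    · have hn : 1 ≤ n := by omega
      have := ih hn
      have : 3 ^ (n+1) = 3 * 3 ^ n := by ring
      omega

lemma pow3_ge3 (i : ℕ) (h : 1 ≤ i) : 3 ≤ 3 ^ i := by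
  calc 3 = 3 ^ 1 := rfl
  _ ≤ 3 ^ i := Nat.pow_le_pow_right (by norm_num) h

lemma hw_ge6 {m : ℕ} (h : HasWitness m) : 6 ≤ m := by
  obtain ⟨k, i, hk, hi, hm⟩ := h
  have h1 := pow3_ge3 i hi
  have h2 := a_ge3 i hi
  have : 3 ^ i ≤ k * 3 ^ i := Nat.le_mul_of_pos_left _ hk
  omega

-- residue structure of witnesses
lemma hw_shape {m : ℕ} (h : HasWitness m) :
    (m % 3 = 0 ∧ ∃ k, 1 ≤ k ∧ m = k * 3 + 3) ∨
    (m % 3 = 2 ∧ HasWitness ((m + 1) / 3)) := by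
  obtain ⟨k, i, hk, hi, hm⟩ := h
  rcases Nat.eq_or_lt_of_le hi with h1 | h1
  · left
    constructor
    · subst hm; rw [← h1]; simp only [a, pow_one]; omega
    · exact ⟨k, hk, by rw [hm, ← h1]; simp only [a, pow_one]⟩
  · right
    obtain ⟨j, hj⟩ : ∃ j, i = j + 1 := ⟨i - 1, by omega⟩
    have hj1 : 1 ≤ j := by omega
    have ha : a (j + 1) = 3 * a j - 1 := a_succ j hj1
    have ha3 := a_ge3 j hj1
    have hm1 : m + 1 = 3 * (k * 3 ^ j + a j) := by
      rw [hm, hj, ha, pow_succ]; ring_nf; omega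
    constructor
    · omega
    · refine ⟨k, j, hk, hj1, ?_⟩
      omega

lemma hwA (t : ℕ) : HasWitness (3 * t) ↔ 2 ≤ t := by
  constructor
  · intro h; have := hw_ge6 h; omega
  · intro h
    exact ⟨t - 1, 1, by omega, le_refl 1, by simp only [a, pow_one]; omega⟩

lemma hwB (t : ℕ) : ¬ HasWitness (3 * t + 1) := by
  intro h
  rcases hw_shape h with ⟨h1, _⟩ | ⟨h1, _⟩ <;> omega

lemma hwC (t : ℕ) : HasWitness (3 * t + 2) ↔ HasWitness (t + 1) := by
  constructor
  · intro h
    rcases hw_shape h with ⟨h1, _⟩ | ⟨_, h2⟩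
    · omega
    · have : (3 * t + 2 + 1) / 3 = t + 1 := by omega
      rwa [this] at h2
  · rintro ⟨k, i, hk, hi, hm⟩
    refine ⟨k, i + 1, hk, by omega, ?_⟩
    have ha : a (i + 1) = 3 * a i - 1 := a_succ i hi
    have ha3 := a_ge3 i hi
    rw [pow_succ, ha]
    have h3 : k * (3 ^ i * 3) = 3 * (k * 3 ^ i) := by ring
    omega

-- uniqueness of the witness index
lemma hw_unique : ∀ i m j k k', 1 ≤ k → 1 ≤ i → 1 ≤ k' → 1 ≤ j →
    m = k * 3 ^ i + a i → m = k' * 3 ^ j + a j → i = j := by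
  intro i
  induction i with
  | zero => intro m j k k' _ hi; omega
  | succ n ih =>
    intro m j k k' hk hi hk' hj h1 h2
    rcases Nat.eq_or_lt_of_le hj with hj1 | hj1
    · -- j = 1 : m % 3 = 0; need i = 1
      rcases Nat.eq_zero_or_pos n with hn | hn
      · omega
      · exfalso
        have hm0 : m % 3 = 0 := by
          rw [h2, ← hj1]; simp only [a, pow_one]; omega
        have hsh : HasWitness m := ⟨k, n + 1, hk, hi, h1⟩
        rcases hw_shape hsh with ⟨_, ⟨k2, hk2, hm2⟩⟩ | ⟨h3, _⟩
        · -- i ≥ 2 but m = k*3^(n+1) + a(n+1) with n ≥ 1: m % 3 = 2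
          have ha : a (n + 1) = 3 * a n - 1 := a_succ n hn
          have ha3 := a_ge3 n hn
          have : m + 1 = 3 * (k * 3 ^ n + a n) := by
            rw [h1, ha, pow_succ]; ring_nf; omega
          omega
        · omega
    · -- j ≥ 2
      rcases Nat.eq_zero_or_pos n with hn | hn
      · -- i = 1, m % 3 = 0 but j ≥ 2 forces m % 3 = 2
        exfalso
        have hm0 : m % 3 = 0 := by subst hn; rw [h1]; simp only [a, pow_one]; omega
        obtain ⟨j', hj'⟩ : ∃ j', j = j' + 1 := ⟨j - 1, by omega⟩
        have hj'1 : 1 ≤ j' := by omega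
        have ha : a (j' + 1) = 3 * a j' - 1 := a_succ j' hj'1
        have ha3 := a_ge3 j' hj'1
        have : m + 1 = 3 * (k' * 3 ^ j' + a j') := by
          rw [h2, hj', ha, pow_succ]; ring_nf; omega
        omega
      · obtain ⟨j', hj'⟩ : ∃ j', j = j' + 1 := ⟨j - 1, by omega⟩
        have hj'1 : 1 ≤ j' := by omega
        have ha : a (n + 1) = 3 * a n - 1 := a_succ n hn
        have ha3 := a_ge3 n hn
        have ha' : a (j' + 1) = 3 * a j' - 1 := a_succ j' hj'1
        have ha3' := a_ge3 j' hj'1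
        have e1 : m + 1 = 3 * (k * 3 ^ n + a n) := by
          rw [h1, ha, pow_succ]; ring_nf; omega
        have e2 : m + 1 = 3 * (k' * 3 ^ j' + a j') := by
          rw [h2, hj', ha', pow_succ]; ring_nf; omega
        have : k * 3 ^ n + a n = k' * 3 ^ j' + a j' := by omega
        have := ih (k * 3 ^ n + a n) j' k k' hk hn hk' hj'1 rfl this
        omega

open Classical in
/-- number of witnessed values in `[1, v]` -/
noncomputable def W (v : ℕ) : ℕ := ∑ w ∈ Finset.Icc 1 v, if HasWitness w then 1 else 0

noncomputable def F (v : ℕ) : ℕ := v + W v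

open Classical in
lemma W_succ (v : ℕ) : W (v + 1) = W v + if HasWitness (v + 1) then 1 else 0 := by
  unfold W
  rw [← Finset.sum_Icc_succ_top (by omega : 1 ≤ v + 1)]

lemma W_zero : W 0 = 0 := by simp [W]

open Classical in
lemma W_small (v : ℕ) (h : v ≤ 5) : W v = 0 := by
  unfold W
  apply Finset.sum_eq_zero
  intro w hw
  simp only [Finset.mem_Icc] at hw
  rw [if_neg]
  intro hc; have := hw_ge6 hc; omega

lemma F_succ (v : ℕ) : F v + 1 ≤ F (v + 1) ∧ F (v + 1) ≤ F v + 2 := by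
  unfold F; rw [W_succ]; split <;> omega

lemma F_mono : StrictMono F := by
  apply strictMono_nat_of_lt_succ
  intro v; have := F_succ v; omega

lemma F_small (v : ℕ) (h : v ≤ 5) : F v = v := by unfold F; rw [W_small v h]; omega

lemma F_ge (v : ℕ) : v ≤ F v := Nat.le_add_right _ _

lemma Fex (n : ℕ) : ∃ v, n ≤ F v := ⟨n, F_ge n⟩

noncomputable def bb (n : ℕ) : ℕ := Nat.find (Fex n)

lemma bb_eval {n v : ℕ} (h1 : F v < n) (h2 : n ≤ F (v + 1)) : bb n = v + 1 := by
  rw [bb, Nat.find_eq_iff]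
  refine ⟨h2, ?_⟩
  intro u hu hc
  have : F u ≤ F v := F_mono.le_iff_le.2 (by omega)
  omega

lemma bb_F (t : ℕ) : bb (F t) = t := by
  cases t with
  | zero =>
    have : F 0 = 0 := F_small 0 (by omega)
    rw [this, bb, Nat.find_eq_iff]
    exact ⟨by omega, by omega⟩
  | succ u => exact bb_eval (F_mono (by omega)) (le_refl _)

lemma bb_F1 (t : ℕ) : bb (F t + 1) = t + 1 :=
  bb_eval (by omega) (F_succ t).1

open Classical in
lemma F_succ_eq (v : ℕ) : F (v + 1) = F v + 1 + if HasWitness (v + 1) then 1 else 0 := by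
  unfold F; rw [W_succ]; split <;> omega

lemma bb_F2_hw {t : ℕ} (h : HasWitness (t + 1)) : bb (F t + 2) = t + 1 := by
  have : F (t + 1) = F t + 2 := by rw [F_succ_eq, if_pos h]
  rw [← this, bb_F]

lemma bb_F2_nhw {t : ℕ} (h : ¬ HasWitness (t + 1)) : bb (F t + 2) = t + 2 := by
  have e : F (t + 1) = F t + 1 := by rw [F_succ_eq, if_neg h]
  calc bb (F t + 2) = bb (F (t + 1) + 1) := by rw [e]
  _ = t + 2 := bb_F1 _

lemma bb_Fm1_hw {t : ℕ} (ht : 1 ≤ t) (h : HasWitness t) : bb (F t - 1) = t := by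
  obtain ⟨s, rfl⟩ : ∃ s, t = s + 1 := ⟨t - 1, by omega⟩
  have e : F (s + 1) = F s + 2 := by rw [F_succ_eq, if_pos h]
  have : F (s + 1) - 1 = F s + 1 := by omega
  rw [this, bb_F1]

lemma bb_Fm1_nhw {t : ℕ} (ht : 1 ≤ t) (h : ¬ HasWitness t) : bb (F t - 1) = t - 1 := by
  obtain ⟨s, rfl⟩ : ∃ s, t = s + 1 := ⟨t - 1, by omega⟩
  have e : F (s + 1) = F s + 1 := by rw [F_succ_eq, if_neg h]
  have : F (s + 1) - 1 = F s := by omega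
  rw [this, bb_F]; omega

lemma bb_le (n : ℕ) : bb n ≤ n := by
  rw [bb]; exact Nat.find_le (F_ge n)

lemma bb_pos {n : ℕ} (h : 1 ≤ n) : 1 ≤ bb n := by
  rw [bb]
  by_contra hc
  push_neg at hc
  interval_cases h' : (Nat.find (Fex n))
  · have := Nat.find_spec (Fex n)
    rw [h'] at this
    rw [F_small 0 (by omega)] at this
    omega

lemma bb_spec (n : ℕ) : n ≤ F (bb n) := Nat.find_spec (Fex n)

lemma bb_min {n u : ℕ} (h : u < bb n) : F u < n := by
  have := Nat.find_min (Fex n) (m := u) h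
  omega

open Classical in
lemma W3 : ∀ t, 1 ≤ t → W (3 * t) = t - 1 + W t := by
  intro t ht
  induction t with
  | zero => omega
  | succ n ih =>
    rcases Nat.eq_zero_or_pos n with hn | hn
    · subst hn
      rw [show 3 * 1 = 3 by norm_num, W_small 3 (by omega), W_small 1 (by omega)]
    · have e1 : W (3 * n + 1) = W (3 * n) := by
        rw [W_succ, if_neg (hwB n)]; omega
      have e2 : W (3 * n + 2) = W (3 * n + 1) + if HasWitness (n + 1) then 1 else 0 := by
        have := W_succ (3 * n + 1)
        rw [show 3 * n + 1 + 1 = 3 * n + 2 by omega] at this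
        rw [this, if_congr (hwC n) rfl rfl]
      have e3 : W (3 * n + 3) = W (3 * n + 2) + 1 := by
        have := W_succ (3 * n + 2)
        rw [show 3 * n + 2 + 1 = 3 * n + 3 by omega] at this
        rw [this, if_pos]
        rw [show 3 * n + 3 = 3 * (n + 1) by omega, hwA]
        omega
      have e4 := W_succ n
      have := ih hn
      rw [show 3 * (n + 1) = 3 * n + 3 by omega, e3, e2, e1, this, e4]
      split <;> omega

lemma W3F {t : ℕ} (ht : 1 ≤ t) : W (3 * t) = F t - 1 := by
  rw [W3 t ht]; unfold F; omega

lemma W31 (t : ℕ) : W (3 * t + 1) = W (3 * t) := by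
  rw [W_succ, if_neg (hwB t)]; omega

open Classical in
lemma W32 (t : ℕ) : W (3 * t + 2) = W (3 * t) + if HasWitness (t + 1) then 1 else 0 := by
  have := W_succ (3 * t + 1)
  rw [show 3 * t + 1 + 1 = 3 * t + 2 by omega] at this
  rw [this, W31, if_congr (hwC t) rfl rfl]

lemma W3m1 {t : ℕ} (ht : 2 ≤ t) : W (3 * t - 1) = F t - 2 := by
  have e : W (3 * t) = W (3 * t - 1) + 1 := by
    have hwt : HasWitness (3 * t) := (hwA t).2 ht
    have := W_succ (3 * t - 1)
    rw [show 3 * t - 1 + 1 = 3 * t by omega] at this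
    rw [this, if_pos hwt]
  have := W3F (by omega : 1 ≤ t)
  have hF : 2 ≤ F t := le_trans ht (F_ge t)
  omega

open Classical in
lemma bb_rec (n : ℕ) (hn : 6 ≤ n) :
    bb n = bb (n - bb (n - 1)) + bb (n - bb (n - 2)) + bb (n - bb (n - 3)) := by
  set v := bb n with hv
  have hnF : n ≤ F v := bb_spec n
  have hv6 : 6 ≤ v := by
    by_contra hc
    push_neg at hc
    have h1 : F v ≤ F 5 := F_mono.le_iff_le.2 (by omega)
    rw [F_small 5 (by omega)] at h1
    omega
  set u := v - 1 with hu
  have hlow : F u < n := bb_min (by omega)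
  have huv : u + 1 = v := by omega
  have hFv : F v = F u + 1 + if HasWitness v then 1 else 0 := by
    have := F_succ_eq u; rwa [huv] at this
  have hu5 : 5 ≤ u := by omega
  have hFudef : F u = u + W u := rfl
  have hWu : u ≤ F u := F_ge u
  have hdisj : n = F u + 1 ∨ n = F u + 2 := by
    rcases Classical.em (HasWitness v) with h | h
    · rw [if_pos h] at hFv; omega
    · rw [if_neg h] at hFv; omega
  have hdisj2 : n = F u + 1 ∨ (n = F u + 2 ∧ HasWitness v) := by
    rcases hdisj with h | h
    · exact Or.inl h
    · refine Or.inr ⟨h, ?_⟩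
      by_contra hc
      rw [if_neg hc] at hFv
      omega
  rcases hdisj2 with hcase | ⟨hcase, hwv⟩
  · -- n = F u + 1 : first occurrence of v
    have b1 : bb (n - 1) = u := by rw [show n - 1 = F u by omega, bb_F]
    rw [b1]
    by_cases hwu : HasWitness u
    · -- second occurrence of u at n-2
      have hu6 : 6 ≤ u := hw_ge6 hwu
      have hFu : F u = F (u - 1) + 2 := by
        have := F_succ_eq (u - 1)
        rw [show u - 1 + 1 = u by omega, if_pos hwu] at this
        omega
      have b2 : bb (n - 2) = u := by
        rw [show n - 2 = F (u - 1) + 1 by omega, bb_F1]; omega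
      have b3 : bb (n - 3) = u - 1 := by
        rw [show n - 3 = F (u - 1) by omega, bb_F]
      rw [b2, b3]
      set t := u / 3 with htdef
      have h3 : u = 3 * t ∨ u = 3 * t + 1 ∨ u = 3 * t + 2 := by omega
      rcases h3 with h3 | h3 | h3
      · -- u = 3t, t ≥ 2
        have ht2 : 2 ≤ t := by omega
        have hW : W u = F t - 1 := by rw [h3]; exact W3F (by omega)
        have hFt : t ≤ F t := F_ge t
        have e1 : n - u = F t := by omega
        have e2 : n - (u - 1) = F t + 1 := by omega
        rw [e1, e2, bb_F, bb_F1]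
        omega
      · exact absurd hwu (by rw [h3]; exact hwB t)
      · -- u = 3t + 2, HasWitness (t+1)
        have ht1 : 1 ≤ t := by omega
        have hwt1 : HasWitness (t + 1) := by
          rw [h3, hwC] at hwu; exact hwu
        have hW : W u = F t := by
          rw [h3, W32, if_pos hwt1, W3F ht1]
          have := F_ge t; omega
        have e1 : n - u = F t + 1 := by omega
        have e2 : n - (u - 1) = F t + 2 := by omega
        rw [e1, e2, bb_F1, bb_F2_hw hwt1]
        omega
    · -- single occurrence of u
      have hFu : F u = F (u - 1) + 1 := by
        have := F_succ_eq (u - 1)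
        rw [show u - 1 + 1 = u by omega, if_neg hwu] at this
        omega
      have b2 : bb (n - 2) = u - 1 := by
        rw [show n - 2 = F (u - 1) by omega, bb_F]
      rw [b2]
      set t := u / 3 with htdef
      have h3 : u = 3 * t ∨ u = 3 * t + 1 ∨ u = 3 * t + 2 := by omega
      rcases h3 with h3 | h3 | h3
      · exact absurd ((hwA t).2 (by omega)) (by rw [← h3] at *; exact hwu)
      · -- u = 3t+1, t ≥ 2 ; u - 1 = 3t has a witness
        have ht2 : 2 ≤ t := by omega
        have hwu1 : HasWitness (u - 1) := by
          rw [show u - 1 = 3 * t by omega]; exact (hwA t).2 ht2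
        have b3 : bb (n - 3) = u - 1 := by
          rw [show n - 3 = F (u - 1) - 1 by omega, bb_Fm1_hw (by omega) hwu1]
        have hW : W u = F t - 1 := by rw [h3, W31]; exact W3F (by omega)
        have hFt : t ≤ F t := F_ge t
        have e1 : n - u = F t := by omega
        have e2 : n - (u - 1) = F t + 1 := by omega
        rw [b3, e1, e2, bb_F, bb_F1]
        omega
      · -- u = 3t+2, ¬HasWitness (t+1) ; u - 1 = 3t+1 no witness
        have ht1 : 1 ≤ t := by omega
        have hwt1 : ¬ HasWitness (t + 1) := by
          rw [h3, hwC] at hwu; exact hwu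
        have hwu1 : ¬ HasWitness (u - 1) := by
          rw [show u - 1 = 3 * t + 1 by omega]; exact hwB t
        have b3 : bb (n - 3) = u - 2 := by
          rw [show n - 3 = F (u - 1) - 1 by omega, bb_Fm1_nhw (by omega) hwu1]
          omega
        have hW : W u = F t - 1 := by
          rw [h3, W32, if_neg hwt1, W3F ht1]
          omega
        have hFt : t ≤ F t := F_ge t
        have e1 : n - u = F t := by omega
        have e2 : n - (u - 1) = F t + 1 := by omega
        have e3 : n - (u - 2) = F t + 2 := by omega
        rw [b3, e1, e2, e3, bb_F, bb_F1, bb_F2_nhw hwt1]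
        omega
  · -- n = F u + 2 : second occurrence of v
    have hFv2 : F v = F u + 2 := by rw [hFv, if_pos hwv]
    have b1 : bb (n - 1) = v := by
      rw [show n - 1 = F u + 1 by omega, bb_F1]; omega
    have b2 : bb (n - 2) = u := by rw [show n - 2 = F u by omega, bb_F]
    rw [b1, b2]
    set t := v / 3 with htdef
    have h3 : v = 3 * t ∨ v = 3 * t + 1 ∨ v = 3 * t + 2 := by omega
    rcases h3 with h3 | h3 | h3
    · -- v = 3t, u = 3t - 1
      have ht2 : 2 ≤ t := by omega
      have hW : W u = F t - 2 := by
        rw [show u = 3 * t - 1 by omega]; exact W3m1 ht2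
      have hFt : t ≤ F t := F_ge t
      have hwut : HasWitness u ↔ HasWitness t := by
        rw [show u = 3 * (t - 1) + 2 by omega, hwC, show t - 1 + 1 = t by omega]
      have e1 : n - v = F t - 1 := by omega
      have e2 : n - u = F t := by omega
      by_cases hwt : HasWitness t
      · have b3 : bb (n - 3) = u := by
          rw [show n - 3 = F u - 1 by omega, bb_Fm1_hw (by omega) (hwut.2 hwt)]
        rw [b3, e1, e2, bb_F, bb_Fm1_hw (by omega) hwt]
        omega
      · have b3 : bb (n - 3) = u - 1 := by
          rw [show n - 3 = F u - 1 by omega,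
            bb_Fm1_nhw (by omega) (fun h => hwt (hwut.1 h))]
        have e3 : n - (u - 1) = F t + 1 := by omega
        rw [b3, e1, e2, e3, bb_F, bb_F1, bb_Fm1_nhw (by omega) hwt]
        omega
    · exact absurd hwv (by rw [h3]; exact hwB t)
    · -- v = 3t+2, u = 3t+1
      have ht2 : 2 ≤ t := by omega
      have hwt1 : HasWitness (t + 1) := by rw [h3, hwC] at hwv; exact hwv
      have hwu : ¬ HasWitness u := by
        rw [show u = 3 * t + 1 by omega]; exact hwB t
      have hW : W u = F t - 1 := by
        rw [show u = 3 * t + 1 by omega, W31]; exact W3F (by omega)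
      have hFt : t ≤ F t := F_ge t
      have b3 : bb (n - 3) = u - 1 := by
        rw [show n - 3 = F u - 1 by omega, bb_Fm1_nhw (by omega) hwu]
      have e1 : n - v = F t := by omega
      have e2 : n - u = F t + 1 := by omega
      have e3 : n - (u - 1) = F t + 2 := by omega
      rw [b3, e1, e2, e3, bb_F, bb_F1, bb_F2_hw hwt1]
      omega

lemma bb_small (n : ℕ) (h : n ≤ 5) : bb n = n := by
  rw [bb, Nat.find_eq_iff]
  constructor
  · rw [F_small n h]
  · intro u hu hc
    rw [F_small u (by omega)] at hc
    omega

lemma B_eq_bb {B : ℕ → ℕ} (hB : IsBSeq B) : ∀ n, B n = bb n := by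
  intro n
  induction n using Nat.strong_induction_on with
  | _ n ih =>
    by_cases hn : n ≤ 5
    · rcases Nat.eq_zero_or_pos n with h0 | h0
      · rw [h0, hB.1, bb_small 0 (by omega)]
      · rw [hB.2.1 n h0 hn, bb_small n hn]
    · push_neg at hn
      have hn6 : 6 ≤ n := hn
      have e1 : B (n - 1) = bb (n - 1) := ih _ (by omega)
      have e2 : B (n - 2) = bb (n - 2) := ih _ (by omega)
      have e3 : B (n - 3) = bb (n - 3) := ih _ (by omega)
      have p1 : 1 ≤ bb (n - 1) := bb_pos (by omega)
      have p2 : 1 ≤ bb (n - 2) := bb_pos (by omega)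
      have p3 : 1 ≤ bb (n - 3) := bb_pos (by omega)
      have q1 : bb (n - 1) ≤ n - 1 := bb_le _
      have q2 : bb (n - 2) ≤ n - 2 := bb_le _
      have q3 : bb (n - 3) ≤ n - 3 := bb_le _
      rw [hB.2.2 n hn6, e1, e2, e3,
        ih (n - bb (n - 1)) (by omega), ih (n - bb (n - 2)) (by omega),
        ih (n - bb (n - 3)) (by omega), ← bb_rec n hn6]

open Classical in
lemma Rmi_succ (m i : ℕ) (hi : 1 ≤ i) :
    Rmi (m + 1) i = Rmi m i + if (∃ k, 1 ≤ k ∧ m = k * 3 ^ i + a i) then 1 else 0 := by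
  unfold Rmi
  have h3 := pow3_ge3 i hi
  by_cases hm : m ≤ a i
  · rw [if_neg]
    · rw [show m - a i - 1 = 0 by omega, show m + 1 - a i - 1 = 0 by omega]; omega
    · rintro ⟨k, hk, he⟩
      have : 3 ^ i ≤ k * 3 ^ i := Nat.le_mul_of_pos_left _ hk
      omega
  · push_neg at hm
    have e : m + 1 - a i - 1 = (m - a i - 1) + 1 := by omega
    rw [e, Nat.succ_div]
    congr 1
    have e2 : m - a i - 1 + 1 = m - a i := by omega
    rw [e2]
    apply if_congr _ rfl rfl
    constructor
    · rintro ⟨c, hc⟩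
      have hc1 : 1 ≤ c := by
        rcases Nat.eq_zero_or_pos c with h | h
        · rw [h, mul_zero] at hc; omega
        · exact h
      exact ⟨c, hc1, by rw [Nat.mul_comm] at hc; omega⟩
    · rintro ⟨k, hk, he⟩
      exact ⟨k, by rw [Nat.mul_comm]; omega⟩

open Classical in
lemma R_succ (m : ℕ) (hm : 1 ≤ m) :
    R (m + 1) = R m + if HasWitness m then 1 else 0 := by
  unfold R
  rw [Finset.sum_Icc_succ_top (by omega : 1 ≤ m + 1)]
  have hlast : Rmi (m + 1) (m + 1) = 0 := by
    have := a_ge (m + 1) (by omega)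
    unfold Rmi
    rw [show m + 1 - a (m + 1) - 1 = 0 by omega]
    simp
  rw [hlast, add_zero]
  have hsum : ∑ i ∈ Finset.Icc 1 m, Rmi (m + 1) i
      = ∑ i ∈ Finset.Icc 1 m, (Rmi m i + if (∃ k, 1 ≤ k ∧ m = k * 3 ^ i + a i) then 1 else 0) := by
    apply Finset.sum_congr rfl
    intro i hi
    simp only [Finset.mem_Icc] at hi
    exact Rmi_succ m i hi.1
  rw [hsum, Finset.sum_add_distrib]
  congr 1
  by_cases hw : HasWitness m
  · rw [if_pos hw]
    obtain ⟨k, i0, hk, hi0, he⟩ := hw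
    have hmem : i0 ∈ Finset.Icc 1 m := by
      simp only [Finset.mem_Icc]
      refine ⟨hi0, ?_⟩
      have h1 := pow3_ge i0 hi0
      have h2 : 3 ^ i0 ≤ k * 3 ^ i0 := Nat.le_mul_of_pos_left _ hk
      have h3 := a_ge3 i0 hi0
      omega
    rw [Finset.sum_eq_single_of_mem i0 hmem]
    · rw [if_pos ⟨k, hk, he⟩]
    · intro j hj hne
      simp only [Finset.mem_Icc] at hj
      rw [if_neg]
      rintro ⟨k', hk', he'⟩
      exact hne (hw_unique j m i0 k' k hk' hj.1 hk hi0 he' he)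
  · rw [if_neg hw]
    apply Finset.sum_eq_zero
    intro j hj
    simp only [Finset.mem_Icc] at hj
    rw [if_neg]
    rintro ⟨k, hk, he⟩
    exact hw ⟨k, j, hk, hj.1, he⟩

lemma R_eq_W : ∀ m, 1 ≤ m → R m = W (m - 1) := by
  intro m hm
  induction m with
  | zero => omega
  | succ p ih =>
    rcases Nat.eq_zero_or_pos p with hp | hp
    · subst hp
      rw [W_zero]
      show ∑ i ∈ Finset.Icc 1 1, Rmi 1 i = 0
      rw [Finset.Icc_self, Finset.sum_singleton]
      show (1 - a 1 - 1) / 3 ^ 1 = 0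
      norm_num [a]
    · rw [R_succ p hp, ih hp, show p + 1 - 1 = (p - 1) + 1 by omega, W_succ,
        show p - 1 + 1 = p by omega]


/-- for `m ≥ 6` a multiple of 3: `B (R m + 1) = m/3` if `m - 1` has a witness and
`B (R m + 1) = m/3 - 1` otherwise; in both cases `B (R m + 2) = m/3` and `B (R m + 3) = m/3 + 1`. -/
theorem stmt_7 (B : ℕ → ℕ) (hB : IsBSeq B) (m : ℕ) (hm : 6 ≤ m) (h3 : 3 ∣ m) :
    (HasWitness (m - 1) → B (R m + 1) = m / 3) ∧
    (¬HasWitness (m - 1) → B (R m + 1) = m / 3 - 1) ∧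
    B (R m + 2) = m / 3 ∧ B (R m + 3) = m / 3 + 1 := by
  obtain ⟨v, hv⟩ := h3
  have hv2 : 2 ≤ v := by omega
  have hdiv : m / 3 = v := by omega
  have hR : R m = F v - 2 := by
    rw [R_eq_W m (by omega), show m - 1 = 3 * v - 1 by omega, W3m1 hv2]
  have hFv : 2 ≤ F v := le_trans hv2 (F_ge v)
  have hwiff : HasWitness (m - 1) ↔ HasWitness v := by
    rw [show m - 1 = 3 * (v - 1) + 2 by omega, hwC, show v - 1 + 1 = v by omega]
  have hBb := B_eq_bb hB
  refine ⟨?_, ?_, ?_, ?_⟩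
  · intro hw
    rw [hBb, hdiv, show R m + 1 = F v - 1 by omega, bb_Fm1_hw (by omega) (hwiff.1 hw)]
  · intro hw
    rw [hBb, hdiv, show R m + 1 = F v - 1 by omega,
      bb_Fm1_nhw (by omega) (fun h => hw (hwiff.2 h))]
  · rw [hBb, hdiv, show R m + 2 = F v by omega, bb_F]
  · rw [hBb, hdiv, show R m + 3 = F v + 1 by omega, bb_F1]
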